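/- For all positive integers K, t, L with t + L ≤ K, set α = gcd(K, gcd(t, L)), F = ((t+L)/α) · C(K/α, (t+L)/α), Z = (t/α) · C(K/α − 1, (t+L)/α − 1), and S = ((K−t)/α) · C(K/α, (t+L)/α), where C(n,k) denotes the binomial coefficient. Then there exists an (L, K, F, Z, S) multiple-antenna placement delivery array. -/

import Mathlib

/-- An `(L, K, F, Z, S)` multiple-antenna placement delivery array (MAPDA):
an `F × K` array with entries `*` (modeled by `none`) or integers in `[S]`
(modeled by `some s`), satisfying conditions C1–C4. -/
def IsMAPDA (L K F Z S : ℕ) (P : Fin F → Fin K → Option (Fin S)) : Prop :=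
  -- C1: the symbol `*` appears exactly `Z` times in each column
  (∀ k : Fin K, (Finset.univ.filter fun f : Fin F => P f k = none).card = Z) ∧
  -- C2: each integer `s ∈ [S]` appears at least once in the array
  (∀ s : Fin S, ∃ f k, P f k = some s) ∧
  -- C3: each integer appears at most once in each column
  (∀ (s : Fin S) (k : Fin K) (f₁ f₂ : Fin F),
      P f₁ k = some s → P f₂ k = some s → f₁ = f₂) ∧
  -- C4: for each `s` and each row `f` containing `s`, among the columns
  -- containing `s`, at most `L` of them have an integer entry in row `f`
  (∀ (s : Fin S) (f : Fin F), (∃ k, P f k = some s) →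
      (Finset.univ.filter fun k : Fin K =>
        (∃ f', P f' k = some s) ∧ (P f k).isSome = true).card ≤ L)

open Finset

namespace MAPDAScheme2

/-- `m`-subsets of `Fin q`. -/
abbrev Subm (q m : ℕ) := {T : Finset (Fin q) // T.card = m}

variable {q t L m : ℕ}

/-- Position of `k` in `T`. -/
def pos (T : Subm q m) (k : Fin q) (hk : k ∈ T.1) : Fin m :=
  (T.1.orderIsoOfFin T.2).symm ⟨k, hk⟩

/-- Element of `T` at position `p`. -/
def elt (T : Subm q m) (p : Fin m) : Fin q := (T.1.orderIsoOfFin T.2 p).1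

lemma elt_mem (T : Subm q m) (p : Fin m) : elt T p ∈ T.1 := (T.1.orderIsoOfFin T.2 p).2

lemma pos_elt (T : Subm q m) (p : Fin m) (h : elt T p ∈ T.1) : pos T (elt T p) h = p :=
  (T.1.orderIsoOfFin T.2).symm_apply_apply p

lemma elt_pos (T : Subm q m) (k : Fin q) (hk : k ∈ T.1) : elt T (pos T k hk) = k :=
  congrArg Subtype.val ((T.1.orderIsoOfFin T.2).apply_symm_apply ⟨k, hk⟩)

lemma elt_injective (T : Subm q m) {p₁ p₂ : Fin m} (h : elt T p₁ = elt T p₂) : p₁ = p₂ := by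
  have h1 := pos_elt T p₁ (elt_mem T p₁)
  have h2 : pos T (elt T p₁) (elt_mem T p₁) = pos T (elt T p₂) (elt_mem T p₂) := by congr 1
  rw [← h1, h2, pos_elt]

lemma compl_card (U : Subm q m) : (U.1ᶜ).card = q - m := by
  rw [Finset.card_compl, U.2, Fintype.card_fin]

/-- Index of `e` in the complement of `U`. -/
def cIdx (U : Subm q m) (e : Fin q) (he : e ∉ U.1) : Fin (q - m) :=
  ((U.1ᶜ).orderIsoOfFin (compl_card U)).symm ⟨e, Finset.mem_compl.2 he⟩

/-- Element of the complement of `U` at index `j`. -/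
def cElt (U : Subm q m) (j : Fin (q - m)) : Fin q := ((U.1ᶜ).orderIsoOfFin (compl_card U) j).1

lemma cElt_not_mem (U : Subm q m) (j : Fin (q - m)) : cElt U j ∉ U.1 :=
  Finset.mem_compl.1 ((U.1ᶜ).orderIsoOfFin (compl_card U) j).2

lemma cIdx_cElt (U : Subm q m) (j : Fin (q - m)) (h : cElt U j ∉ U.1) : cIdx U (cElt U j) h = j :=
  ((U.1ᶜ).orderIsoOfFin (compl_card U)).symm_apply_apply j

lemma cElt_cIdx (U : Subm q m) (e : Fin q) (he : e ∉ U.1) : cElt U (cIdx U e he) = e :=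
  congrArg Subtype.val (((U.1ᶜ).orderIsoOfFin (compl_card U)).apply_symm_apply ⟨e, Finset.mem_compl.2 he⟩)

/-- The subset obtained from `T` by replacing `e` with `k`. -/
def outV (hm : 0 < m) (T : Subm q m) (k e : Fin q) (he : e ∈ T.1) (hk : k ∉ T.1) : Subm q m :=
  ⟨insert k (T.1.erase e), by
    rw [Finset.card_insert_of_notMem (fun h => hk (Finset.mem_of_mem_erase h)),
      Finset.card_erase_of_mem he, T.2]
    omega⟩

lemma mem_outV (hm : 0 < m) (T : Subm q m) (k e : Fin q) (he : e ∈ T.1) (hk : k ∉ T.1) :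
    k ∈ (outV hm T k e he hk).1 := Finset.mem_insert_self _ _

lemma not_mem_outV (hm : 0 < m) (T : Subm q m) (k e : Fin q) (he : e ∈ T.1) (hk : k ∉ T.1) :
    e ∉ (outV hm T k e he hk).1 := by
  intro h
  rcases Finset.mem_insert.1 h with h | h
  · exact hk (h ▸ he)
  · exact (Finset.mem_erase.1 h).1 rfl

lemma outV_erase (hm : 0 < m) (T : Subm q m) (k e : Fin q) (he : e ∈ T.1) (hk : k ∉ T.1) :
    insert e ((outV hm T k e he hk).1.erase k) = T.1 := by
  have h1 : (insert k (T.1.erase e)).erase k = T.1.erase e :=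
    Finset.erase_insert (fun h => hk (Finset.mem_of_mem_erase h))
  show insert e ((insert k (T.1.erase e)).erase k) = T.1
  rw [h1, Finset.insert_erase he]

/-- Values of the MAPDA. -/
abbrev Val (q t L : ℕ) := Subm q (t + L) × (Fin L ⊕ Fin (q - (t + L)))

/-- The special element used by the out-branch. -/
def sel (hL : 0 < L) (T : Subm q (t + L)) (i : Fin (t + L)) : Fin q :=
  elt T (i - ⟨t, Nat.lt_add_of_pos_right hL⟩)

lemma sel_mem (hL : 0 < L) (T : Subm q (t + L)) (i : Fin (t + L)) : sel hL T i ∈ T.1 :=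
  elt_mem _ _

/-- The value placed at an out-cell. -/
def outval (hL : 0 < L) (T : Subm q (t + L)) (i : Fin (t + L)) (k : Fin q) (hk : k ∉ T.1) :
    Val q t L :=
  (outV (Nat.add_pos_right t hL) T k (sel hL T i) (sel_mem hL T i) hk,
   Sum.inr (cIdx (outV (Nat.add_pos_right t hL) T k (sel hL T i) (sel_mem hL T i) hk)
     (sel hL T i) (not_mem_outV _ T k _ _ hk)))

/-- The value placed at an in-cell. -/
def inval (T : Subm q (t + L)) (d : Fin (t + L)) (hd : ¬ d.val < t) : Val q t L :=
  (T, Sum.inl ⟨d.val - t, by have := d.isLt; omega⟩)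

/-- The core array. -/
def arr (hL : 0 < L) (T : Subm q (t + L)) (i : Fin (t + L)) (k : Fin q) : Option (Val q t L) :=
  if hk : k ∈ T.1 then
    if hd : (i - pos T k hk).val < t then none
    else some (inval T (i - pos T k hk) hd)
  else
    some (outval hL T i k hk)

lemma arr_eq_none_iff (hL : 0 < L) (T : Subm q (t + L)) (i : Fin (t + L)) (k : Fin q)
    (hk : k ∈ T.1) : arr hL T i k = none ↔ (i - pos T k hk).val < t := by
  unfold arr
  rw [dif_pos hk]
  split_ifs with h <;> simp [h]

lemma arr_isSome_of_not_mem (hL : 0 < L) (T : Subm q (t + L)) (i : Fin (t + L)) (k : Fin q)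
    (hk : k ∉ T.1) : (arr hL T i k).isSome := by
  unfold arr
  rw [dif_neg hk]
  rfl

lemma arr_isSome_iff (hL : 0 < L) (T : Subm q (t + L)) (i : Fin (t + L)) (k : Fin q)
    (hk : k ∈ T.1) : (arr hL T i k).isSome ↔ ¬ (i - pos T k hk).val < t := by
  unfold arr
  rw [dif_pos hk]
  split_ifs with h <;> simp [h]

lemma arr_mem_of_some (hL : 0 < L) (T : Subm q (t + L)) (i : Fin (t + L)) (k : Fin q)
    (s : Val q t L) (h : arr hL T i k = some s) : k ∈ s.1.1 := by
  unfold arr at h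
  split_ifs at h with hk hd
  · have h2 := Option.some.inj h
    subst h2
    exact hk
  · have h2 := Option.some.inj h
    subst h2
    exact mem_outV (Nat.add_pos_right t hL) T k (sel hL T i) (sel_mem hL T i) hk

end MAPDAScheme2

namespace MAPDAScheme2

open Finset

variable {q t L m : ℕ}

lemma card_filter_equiv {α β : Type*} [Fintype α] [Fintype β] (e : α ≃ β) (p : β → Prop)
    [DecidablePred p] :
    (univ.filter fun a => p (e a)).card = (univ.filter p).card := by
  refine Finset.card_bij (fun a _ => e a) ?_ ?_ ?_
  · intro a ha
    rw [Finset.mem_filter] at ha ⊢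
    exact ⟨mem_univ _, ha.2⟩
  · intro a1 _ a2 _ h
    exact e.injective h
  · intro b hb
    refine ⟨e.symm b, ?_, e.apply_symm_apply b⟩
    rw [Finset.mem_filter]
    refine ⟨mem_univ _, ?_⟩
    rw [e.apply_symm_apply]
    exact (Finset.mem_filter.1 hb).2

lemma card_filter_prod {α β : Type*} [Fintype α] [Fintype β] [DecidableEq α] (P : α → β → Prop)
    [∀ a b, Decidable (P a b)] :
    (univ.filter fun x : α × β => P x.1 x.2).card = ∑ a : α, (univ.filter fun b => P a b).card := by
  rw [Finset.card_eq_sum_card_fiberwise (f := fun x : α × β => x.1) (t := univ)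
    (fun x _ => mem_univ _)]
  refine Finset.sum_congr rfl fun a _ => ?_
  refine Finset.card_bij (fun x _ => x.2) ?_ ?_ ?_
  · intro x hx
    have hx' := Finset.mem_filter.1 hx
    have h1 := Finset.mem_filter.1 hx'.1
    rw [Finset.mem_filter]
    exact ⟨mem_univ _, hx'.2 ▸ h1.2⟩
  · intro x1 hx1 x2 hx2 h
    have e1 := (Finset.mem_filter.1 hx1).2
    have e2 := (Finset.mem_filter.1 hx2).2
    exact Prod.ext_iff.2 ⟨e1.trans e2.symm, h⟩
  · intro b hb
    exact ⟨(a, b), Finset.mem_filter.2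
      ⟨Finset.mem_filter.2 ⟨mem_univ _, (Finset.mem_filter.1 hb).2⟩, rfl⟩, rfl⟩

lemma card_fin_lt (n a : ℕ) (h : a ≤ n) :
    (univ.filter fun d : Fin n => d.val < a).card = a := by
  have key : (univ.filter fun d : Fin n => d.val < a).card = (univ : Finset (Fin a)).card := by
    refine Finset.card_bij' (fun d hd => (⟨d.val, (Finset.mem_filter.1 hd).2⟩ : Fin a))
      (fun x _ => Fin.castLE h x) ?_ ?_ ?_ ?_
    · intro d hd; exact mem_univ _
    · intro x _
      rw [Finset.mem_filter]
      exact ⟨mem_univ _, x.isLt⟩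
    · intro d hd; exact Fin.ext rfl
    · intro x hx; exact Fin.ext rfl
  rw [key, Finset.card_univ, Fintype.card_fin]

lemma card_fin_not_lt (n a : ℕ) (h : a ≤ n) :
    (univ.filter fun d : Fin n => ¬ d.val < a).card = n - a := by
  have h2 := Finset.card_filter_add_card_filter_not (s := (univ : Finset (Fin n)))
    (p := fun d : Fin n => d.val < a)
  rw [card_fin_lt n a h, Finset.card_univ, Fintype.card_fin] at h2
  omega

lemma card_subm_mem (hm : 0 < m) (k : Fin q) :
    (univ.filter fun T : Subm q m => k ∈ T.1).card = (q - 1).choose (m - 1) := by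
  have htarget : (((univ : Finset (Fin q)).erase k).powersetCard (m - 1)).card
      = (q - 1).choose (m - 1) := by
    rw [Finset.card_powersetCard, Finset.card_erase_of_mem (mem_univ k), Finset.card_univ,
      Fintype.card_fin]
  rw [← htarget]
  refine Finset.card_bij' (fun T _ => T.1.erase k)
    (fun A hA => (⟨insert k A, by
      obtain ⟨hsub, hcard⟩ := Finset.mem_powersetCard.1 hA
      rw [Finset.card_insert_of_notMem (fun hkA => Finset.notMem_erase k univ (hsub hkA)),
        hcard]
      omega⟩ : Subm q m)) ?_ ?_ ?_ ?_
  · intro T hT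
    have hk := (Finset.mem_filter.1 hT).2
    rw [Finset.mem_powersetCard]
    exact ⟨Finset.erase_subset_erase k (Finset.subset_univ _),
      by rw [Finset.card_erase_of_mem hk, T.2]⟩
  · intro A hA
    rw [Finset.mem_filter]
    exact ⟨mem_univ _, Finset.mem_insert_self _ _⟩
  · intro T hT
    have hk := (Finset.mem_filter.1 hT).2
    exact Subtype.ext (by simp only; rw [Finset.insert_erase hk])
  · intro A hA
    obtain ⟨hsub, hcard⟩ := Finset.mem_powersetCard.1 hA
    simp only
    rw [Finset.erase_insert (fun hkA => Finset.notMem_erase k univ (hsub hkA))]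

lemma card_arr_none (ht : 0 < t) (hL : 0 < L) (k : Fin q) :
    (univ.filter fun r : Subm q (t + L) × Fin (t + L) => arr hL r.1 r.2 k = none).card
      = t * (q - 1).choose (t + L - 1) := by
  haveI : NeZero (t + L) := ⟨by omega⟩
  rw [card_filter_prod (P := fun (T : Subm q (t + L)) (i : Fin (t + L)) => arr hL T i k = none)]
  have key : ∀ T : Subm q (t + L),
      (univ.filter fun i => arr hL T i k = none).card = if k ∈ T.1 then t else 0 := by
    intro T
    by_cases hk : k ∈ T.1
    · rw [if_pos hk]
      rw [Finset.filter_congr (fun i (_ : i ∈ univ) => arr_eq_none_iff hL T i k hk)]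
      have : (univ.filter fun i : Fin (t + L) => (i - pos T k hk).val < t)
          = univ.filter fun i : Fin (t + L) => ((Equiv.subRight (pos T k hk)) i).val < t := rfl
      rw [this, card_filter_equiv (Equiv.subRight (pos T k hk))
        (fun d : Fin (t + L) => d.val < t)]
      exact card_fin_lt _ _ (by omega)
    · rw [if_neg hk, Finset.filter_false_of_mem, Finset.card_empty]
      intro i _ hnone
      have h2 := arr_isSome_of_not_mem hL T i k hk
      rw [hnone] at h2
      simp at h2
  rw [Finset.sum_congr rfl (fun T _ => key T), ← Finset.sum_filter, Finset.sum_const,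
    card_subm_mem (by omega : 0 < t + L) k, smul_eq_mul, mul_comm]

lemma card_mem_isSome (ht : 0 < t) (hL : 0 < L) (T : Subm q (t + L)) (i : Fin (t + L)) :
    (univ.filter fun k : Fin q => k ∈ T.1 ∧ (arr hL T i k).isSome).card = L := by
  haveI : NeZero (t + L) := ⟨by omega⟩
  have h2 : (univ.filter fun p : Fin (t + L) => ¬ (i - p).val < t).card = L := by
    have : (univ.filter fun p : Fin (t + L) => ¬ (i - p).val < t)
        = univ.filter fun p : Fin (t + L) => ¬ ((Equiv.subLeft i) p).val < t := rfl
    rw [this, card_filter_equiv (Equiv.subLeft i) (fun d : Fin (t + L) => ¬ d.val < t),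
      card_fin_not_lt _ _ (by omega)]
    omega
  refine Eq.trans ?_ h2
  refine Finset.card_bij' (fun k hk => pos T k (Finset.mem_filter.1 hk).2.1)
    (fun p _ => elt T p) ?_ ?_ ?_ ?_
  · intro k hk
    have h3 := (Finset.mem_filter.1 hk).2
    rw [Finset.mem_filter]
    refine ⟨mem_univ _, ?_⟩
    exact (arr_isSome_iff hL T i k h3.1).1 h3.2
  · intro p hp
    have h3 := (Finset.mem_filter.1 hp).2
    rw [Finset.mem_filter]
    refine ⟨mem_univ _, elt_mem T p, ?_⟩
    rw [arr_isSome_iff hL T i (elt T p) (elt_mem T p), pos_elt]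
    exact h3
  · intro k hk
    exact elt_pos T k _
  · intro p hp
    exact pos_elt T p _

end MAPDAScheme2

namespace MAPDAScheme2

open Finset

variable {q t L : ℕ}

lemma arr_exists (ht : 0 < t) (hL : 0 < L) (s : Val q t L) :
    ∃ (T : Subm q (t + L)) (i : Fin (t + L)) (k : Fin q), arr hL T i k = some s := by
  haveI : NeZero (t + L) := ⟨by omega⟩
  obtain ⟨U, c⟩ := s
  have hU : U.1.Nonempty := Finset.card_pos.1 (by rw [U.2]; omega)
  obtain ⟨k, hk⟩ := hU
  cases c with
  | inl j =>
    have hjt : t + j.val < t + L := by have := j.isLt; omega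
    refine ⟨U, pos U k hk + ⟨t + j.val, hjt⟩, k, ?_⟩
    have hd : (pos U k hk + ⟨t + j.val, hjt⟩ : Fin (t + L)) - pos U k hk
        = ⟨t + j.val, hjt⟩ := add_sub_cancel_left _ _
    have hd2 : ((pos U k hk + ⟨t + j.val, hjt⟩ : Fin (t + L)) - pos U k hk).val = t + j.val := by
      rw [hd]
    unfold arr
    rw [dif_pos hk, dif_neg (by omega)]
    refine congrArg some ?_
    unfold inval
    refine Prod.ext_iff.2 ⟨rfl, ?_⟩
    refine congrArg Sum.inl (Fin.ext ?_)
    show ((pos U k hk + ⟨t + j.val, hjt⟩ - pos U k hk) : Fin (t + L)).val - t = j.val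
    omega
  | inr j =>
    have he : cElt U j ∉ U.1 := cElt_not_mem U j
    have hek : cElt U j ≠ k := fun h => he (h ▸ hk)
    have hTcard : (insert (cElt U j) (U.1.erase k)).card = t + L := by
      rw [Finset.card_insert_of_notMem (fun h => he (Finset.mem_of_mem_erase h)),
        Finset.card_erase_of_mem hk, U.2]
      omega
    set T : Subm q (t + L) := ⟨insert (cElt U j) (U.1.erase k), hTcard⟩ with hTdef
    have heT : cElt U j ∈ T.1 := Finset.mem_insert_self _ _
    have hkT : k ∉ T.1 := by
      intro h
      rcases Finset.mem_insert.1 h with h | h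
      · exact hek h.symm
      · exact (Finset.mem_erase.1 h).1 rfl
    have hlt : t < t + L := by omega
    set i : Fin (t + L) := pos T (cElt U j) heT + ⟨t, hlt⟩ with hidef
    refine ⟨T, i, k, ?_⟩
    have hsel : sel hL T i = cElt U j := by
      unfold sel
      have h5 : i - (⟨t, Nat.lt_add_of_pos_right hL⟩ : Fin (t + L)) = pos T (cElt U j) heT := by
        rw [hidef]
        exact add_sub_cancel_right _ _
      rw [h5, elt_pos]
    have key : ∀ (x : Fin q) (hx : x ∈ T.1), x = cElt U j →
        (outV (Nat.add_pos_right t hL) T k x hx hkT,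
          Sum.inr (cIdx (outV (Nat.add_pos_right t hL) T k x hx hkT) x
            (not_mem_outV (Nat.add_pos_right t hL) T k x hx hkT)))
          = ((U, Sum.inr j) : Val q t L) := by
      intro x hx hxe
      subst hxe
      have hVU : outV (Nat.add_pos_right t hL) T k (cElt U j) hx hkT = U := by
        refine Subtype.ext ?_
        show insert k (T.1.erase (cElt U j)) = U.1
        have h6 : T.1.erase (cElt U j) = U.1.erase k := by
          show (insert (cElt U j) (U.1.erase k)).erase (cElt U j) = U.1.erase k
          exact Finset.erase_insert (fun h => he (Finset.mem_of_mem_erase h))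
        rw [h6, Finset.insert_erase hk]
      have key2 : ∀ (V : Subm q (t + L)) (hV : V = U) (pf : cElt U j ∉ V.1),
          (V, Sum.inr (cIdx V (cElt U j) pf)) = ((U, Sum.inr j) : Val q t L) := by
        intro V hV pf
        subst hV
        simp only [Prod.mk.injEq, Sum.inr.injEq, true_and]
        exact cIdx_cElt V j pf
      exact key2 _ hVU _
    show arr hL T i k = some (U, Sum.inr j)
    unfold arr
    rw [dif_neg hkT]
    exact congrArg some (key (sel hL T i) (sel_mem hL T i) hsel)

end MAPDAScheme2

namespace MAPDAScheme2

open Finset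

variable {q t L : ℕ}

lemma arr_inj (ht : 0 < t) (hL : 0 < L) {T1 T2 : Subm q (t + L)} {i1 i2 : Fin (t + L)}
    {k : Fin q} {s : Val q t L} (h1 : arr hL T1 i1 k = some s) (h2 : arr hL T2 i2 k = some s) :
    T1 = T2 ∧ i1 = i2 := by
  haveI : NeZero (t + L) := ⟨by omega⟩
  obtain ⟨V, c⟩ := s
  unfold arr at h1 h2
  by_cases hk1 : k ∈ T1.1 <;> by_cases hk2 : k ∈ T2.1
  · rw [dif_pos hk1] at h1
    rw [dif_pos hk2] at h2
    split_ifs at h1 with hd1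
    split_ifs at h2 with hd2
    have e1 := Option.some.inj h1
    have e2 := Option.some.inj h2
    unfold inval at e1 e2
    obtain ⟨hT1V, hc1⟩ := Prod.mk.injEq .. ▸ e1
    obtain ⟨hT2V, hc2⟩ := Prod.mk.injEq .. ▸ e2
    subst hT1V
    have hTT : T1 = T2 := hT2V.symm
    subst hTT
    refine ⟨rfl, ?_⟩
    have hcc := Sum.inl.inj (hc1.trans hc2.symm)
    have hvv : (i1 - pos T1 k hk1).val - t = (i2 - pos T1 k hk2).val - t :=
      congrArg Fin.val hcc
    have hpp : pos T1 k hk1 = pos T1 k hk2 := rfl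
    have hdd : i1 - pos T1 k hk1 = i2 - pos T1 k hk1 := by
      refine Fin.ext ?_
      rw [hpp] at hd1 ⊢
      omega
    exact sub_left_inj.1 hdd
  · rw [dif_pos hk1] at h1
    rw [dif_neg hk2] at h2
    split_ifs at h1 with hd1
    have e1 := Option.some.inj h1
    have e2 := Option.some.inj h2
    unfold inval at e1
    unfold outval at e2
    obtain ⟨hT1V, hc1⟩ := Prod.mk.injEq .. ▸ e1
    obtain ⟨hT2V, hc2⟩ := Prod.mk.injEq .. ▸ e2
    rw [← hc1] at hc2
    cases hc2
  · rw [dif_neg hk1] at h1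
    rw [dif_pos hk2] at h2
    split_ifs at h2 with hd2
    have e1 := Option.some.inj h1
    have e2 := Option.some.inj h2
    unfold outval at e1
    unfold inval at e2
    obtain ⟨hT1V, hc1⟩ := Prod.mk.injEq .. ▸ e1
    obtain ⟨hT2V, hc2⟩ := Prod.mk.injEq .. ▸ e2
    rw [← hc1] at hc2
    cases hc2
  · rw [dif_neg hk1] at h1
    rw [dif_neg hk2] at h2
    have e1 := Option.some.inj h1
    have e2 := Option.some.inj h2
    unfold outval at e1 e2
    obtain ⟨hV1, hc1⟩ := Prod.mk.injEq .. ▸ e1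
    obtain ⟨hV2, hc2⟩ := Prod.mk.injEq .. ▸ e2
    obtain ⟨j, rfl⟩ : ∃ j, c = Sum.inr j := by
      cases c with
      | inl j => cases hc1
      | inr j => exact ⟨j, rfl⟩
    have hj1 := Sum.inr.inj hc1
    have hj2 := Sum.inr.inj hc2
    have key : ∀ (W : Subm q (t + L)) (hW : W = V) (x : Fin q) (pf : x ∉ W.1)
        (hx : cIdx W x pf = j), x = cElt V j := by
      intro W hW x pf hx
      subst hW
      rw [← hx, cElt_cIdx]
    have hs1 : sel hL T1 i1 = cElt V j := key _ hV1 _ _ hj1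
    have hs2 : sel hL T2 i2 = cElt V j := key _ hV2 _ _ hj2
    have hT1e : insert (sel hL T1 i1) (V.1.erase k) = T1.1 := by
      have h7 := outV_erase (Nat.add_pos_right t hL) T1 k (sel hL T1 i1)
        (sel_mem hL T1 i1) hk1
      rw [hV1] at h7
      exact h7
    have hT2e : insert (sel hL T2 i2) (V.1.erase k) = T2.1 := by
      have h7 := outV_erase (Nat.add_pos_right t hL) T2 k (sel hL T2 i2)
        (sel_mem hL T2 i2) hk2
      rw [hV2] at h7
      exact h7
    have hTT : T1 = T2 := by
      refine Subtype.ext ?_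
      rw [← hT1e, ← hT2e, hs1, hs2]
    subst hTT
    refine ⟨rfl, ?_⟩
    have hee : elt T1 (i1 - ⟨t, Nat.lt_add_of_pos_right hL⟩)
        = elt T1 (i2 - ⟨t, Nat.lt_add_of_pos_right hL⟩) := by
      show sel hL T1 i1 = sel hL T1 i2
      rw [hs1, hs2]
    exact sub_left_inj.1 (elt_injective T1 hee)

lemma card_bound (ht : 0 < t) (hL : 0 < L) {T : Subm q (t + L)} {i : Fin (t + L)} {k0 : Fin q}
    {s : Val q t L} (h : arr hL T i k0 = some s) :
    (univ.filter fun k : Fin q => k ∈ s.1.1 ∧ (arr hL T i k).isSome).card ≤ L := by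
  haveI : NeZero (t + L) := ⟨by omega⟩
  unfold arr at h
  split_ifs at h with hk0 hd
  · have e1 := Option.some.inj h
    have hs1 : s.1 = T := by rw [← e1]; rfl
    rw [hs1]
    exact le_of_eq (card_mem_isSome ht hL T i)
  · have e1 := Option.some.inj h
    have hs1 : s.1 = outV (Nat.add_pos_right t hL) T k0 (sel hL T i) (sel_mem hL T i) hk0 := by
      rw [← e1]; rfl
    have hxT : sel hL T i ∈ T.1 := sel_mem hL T i
    have hxSome : (arr hL T i (sel hL T i)).isSome := by
      rw [arr_isSome_iff hL T i (sel hL T i) hxT]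
      have hp : pos T (sel hL T i) hxT = i - ⟨t, Nat.lt_add_of_pos_right hL⟩ :=
        pos_elt T _ _
      rw [hp, sub_sub_cancel]
      show ¬ t < t
      omega
    have hsub : (univ.filter fun k : Fin q => k ∈ s.1.1 ∧ (arr hL T i k).isSome)
        ⊆ insert k0 ((univ.filter fun k : Fin q => k ∈ T.1 ∧ (arr hL T i k).isSome).erase
          (sel hL T i)) := by
      intro k hk
      obtain ⟨-, hmem, hsome⟩ := Finset.mem_filter.1 hk
      rw [hs1] at hmem
      rcases Finset.mem_insert.1 hmem with h' | h'
      · exact Finset.mem_insert.2 (Or.inl h')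
      · refine Finset.mem_insert.2 (Or.inr (Finset.mem_erase.2
          ⟨(Finset.mem_erase.1 h').1, Finset.mem_filter.2
            ⟨mem_univ _, Finset.mem_of_mem_erase h', hsome⟩⟩))
    calc (univ.filter fun k : Fin q => k ∈ s.1.1 ∧ (arr hL T i k).isSome).card
        ≤ (insert k0 ((univ.filter fun k : Fin q => k ∈ T.1 ∧ (arr hL T i k).isSome).erase
            (sel hL T i))).card := Finset.card_le_card hsub
      _ ≤ ((univ.filter fun k : Fin q => k ∈ T.1 ∧ (arr hL T i k).isSome).erase
            (sel hL T i)).card + 1 := Finset.card_insert_le _ _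
      _ ≤ L := by
          rw [Finset.card_erase_of_mem (Finset.mem_filter.2 ⟨mem_univ _, hxT, hxSome⟩),
            card_mem_isSome ht hL T i]
          omega

lemma card_filter_snd {K a b : ℕ} (e : Fin K ≃ Fin a × Fin b) (p : Fin b → Prop)
    [DecidablePred p] :
    (univ.filter fun k => p ((e k).2)).card = a * (univ.filter p).card := by
  rw [card_filter_equiv e (fun x : Fin a × Fin b => p x.2)]
  have h1 : (univ.filter fun x : Fin a × Fin b => p x.2) = univ ×ˢ univ.filter p := by
    ext x
    simp [Finset.mem_product]
  rw [h1, Finset.card_product, Finset.card_univ, Fintype.card_fin]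

end MAPDAScheme2

open MAPDAScheme2 Finset in
/-- For all positive integers `K, t, L` with `t + L ≤ K`, with
`α = gcd(K, gcd(t, L))`, `F = ((t+L)/α)·C(K/α, (t+L)/α)`,
`Z = (t/α)·C(K/α − 1, (t+L)/α − 1)` and `S = ((K−t)/α)·C(K/α, (t+L)/α)`,
there exists an `(L, K, F, Z, S)` MAPDA. -/
theorem exists_MAPDA_scheme2 (K t L : ℕ) (hK : 0 < K) (ht : 0 < t) (hL : 0 < L)
    (htL : t + L ≤ K) (α F Z S : ℕ)
    (hα : α = Nat.gcd K (Nat.gcd t L))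
    (hF : F = ((t + L) / α) * Nat.choose (K / α) ((t + L) / α))
    (hZ : Z = (t / α) * Nat.choose (K / α - 1) ((t + L) / α - 1))
    (hS : S = ((K - t) / α) * Nat.choose (K / α) ((t + L) / α)) :
    ∃ P : Fin F → Fin K → Option (Fin S), IsMAPDA L K F Z S P := by
  have hα0 : 0 < α := by rw [hα]; exact Nat.gcd_pos_of_pos_left _ hK
  have hdK : α ∣ K := by rw [hα]; exact Nat.gcd_dvd_left _ _
  have hdt : α ∣ t := by rw [hα]; exact (Nat.gcd_dvd_right _ _).trans (Nat.gcd_dvd_left _ _)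
  have hdL : α ∣ L := by rw [hα]; exact (Nat.gcd_dvd_right _ _).trans (Nat.gcd_dvd_right _ _)
  obtain ⟨q, hq⟩ := hdK
  obtain ⟨t', ht2⟩ := hdt
  obtain ⟨L', hL2⟩ := hdL
  have hqv : K / α = q := by rw [hq, Nat.mul_div_cancel_left _ hα0]
  have htv : t / α = t' := by rw [ht2, Nat.mul_div_cancel_left _ hα0]
  have hmv : (t + L) / α = t' + L' := by
    rw [ht2, hL2, ← Nat.mul_add, Nat.mul_div_cancel_left _ hα0]
  have hKtv : (K - t) / α = q - t' := by
    rw [hq, ht2, ← Nat.mul_sub, Nat.mul_div_cancel_left _ hα0]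
  have ht'0 : 0 < t' := by
    rcases Nat.eq_zero_or_pos t' with h | h
    · subst h; rw [Nat.mul_zero] at ht2; omega
    · exact h
  have hL'0 : 0 < L' := by
    rcases Nat.eq_zero_or_pos L' with h | h
    · subst h; rw [Nat.mul_zero] at hL2; omega
    · exact h
  have hqm : t' + L' ≤ q := by
    have h3 := htL
    rw [hq, ht2, hL2, ← Nat.mul_add] at h3
    exact Nat.le_of_mul_le_mul_left h3 hα0
  have hcardR : Fintype.card (Subm q (t' + L') × Fin (t' + L')) = F := by
    rw [Fintype.card_prod, Fintype.card_finset_len, Fintype.card_fin, Fintype.card_fin,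
      hF, hqv, hmv]
    exact Nat.mul_comm _ _
  have hcardV : Fintype.card (Val q t' L') = S := by
    show Fintype.card (Subm q (t' + L') × (Fin L' ⊕ Fin (q - (t' + L')))) = S
    rw [Fintype.card_prod, Fintype.card_finset_len, Fintype.card_fin, Fintype.card_sum,
      Fintype.card_fin, Fintype.card_fin, hS, hqv, hmv, hKtv,
      show L' + (q - (t' + L')) = q - t' from by omega]
    exact Nat.mul_comm _ _
  have eR : (Subm q (t' + L') × Fin (t' + L')) ≃ Fin F := Fintype.equivFinOfCardEq hcardR
  have eV : Val q t' L' ≃ Fin S := Fintype.equivFinOfCardEq hcardV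
  have eK : Fin K ≃ Fin α × Fin q := (finCongr hq).trans finProdFinEquiv.symm
  refine ⟨fun f k => (arr hL'0 (eR.symm f).1 (eR.symm f).2 ((eK k).2)).map eV,
    ?_, ?_, ?_, ?_⟩
  · -- C1
    intro k
    calc (univ.filter fun f : Fin F =>
          (arr hL'0 (eR.symm f).1 (eR.symm f).2 ((eK k).2)).map eV = none).card
        = (univ.filter fun f : Fin F =>
            arr hL'0 (eR.symm f).1 (eR.symm f).2 ((eK k).2) = none).card := by
          rw [Finset.filter_congr fun f (_ : f ∈ univ) =>
            (Option.map_eq_none_iff :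
              (arr hL'0 (eR.symm f).1 (eR.symm f).2 ((eK k).2)).map eV = none ↔ _)]
      _ = (univ.filter fun r : Subm q (t' + L') × Fin (t' + L') =>
            arr hL'0 r.1 r.2 ((eK k).2) = none).card :=
          card_filter_equiv eR.symm
            (fun r : Subm q (t' + L') × Fin (t' + L') => arr hL'0 r.1 r.2 ((eK k).2) = none)
      _ = t' * (q - 1).choose (t' + L' - 1) := card_arr_none ht'0 hL'0 _
      _ = Z := by rw [hZ, htv, hqv, hmv]
  · -- C2
    intro s
    obtain ⟨T, i, k', hk'⟩ := arr_exists ht'0 hL'0 (eV.symm s)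
    refine ⟨eR (T, i), eK.symm (⟨0, hα0⟩, k'), ?_⟩
    show (arr hL'0 (eR.symm (eR (T, i))).1 (eR.symm (eR (T, i))).2
        ((eK (eK.symm (⟨0, hα0⟩, k'))).2)).map eV = some s
    rw [Equiv.symm_apply_apply, Equiv.apply_symm_apply]
    show (arr hL'0 T i k').map eV = some s
    rw [hk', Option.map_some, Equiv.apply_symm_apply]
  · -- C3
    intro s k f1 f2 h1 h2
    have h1' : (arr hL'0 (eR.symm f1).1 (eR.symm f1).2 ((eK k).2)).map eV = some s := h1
    have h2' : (arr hL'0 (eR.symm f2).1 (eR.symm f2).2 ((eK k).2)).map eV = some s := h2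
    rw [Option.map_eq_some_iff] at h1' h2'
    obtain ⟨a1, ha1, he1⟩ := h1'
    obtain ⟨a2, ha2, he2⟩ := h2'
    obtain rfl : a1 = a2 := eV.injective (he1.trans he2.symm)
    have h3 := arr_inj ht'0 hL'0 ha1 ha2
    have h4 : eR.symm f1 = eR.symm f2 := Prod.ext_iff.2 ⟨h3.1, h3.2⟩
    exact eR.symm.injective h4
  · -- C4
    intro s f hf
    obtain ⟨k0, hk0⟩ := hf
    have hk0' : (arr hL'0 (eR.symm f).1 (eR.symm f).2 ((eK k0).2)).map eV = some s := hk0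
    rw [Option.map_eq_some_iff] at hk0'
    obtain ⟨s', hs', hes'⟩ := hk0'
    have hstep : (univ.filter fun k : Fin K => (eK k).2 ∈ s'.1.1 ∧
        (arr hL'0 (eR.symm f).1 (eR.symm f).2 ((eK k).2)).isSome).card ≤ L := by
      have h8 := card_filter_snd eK (fun k' : Fin q => k' ∈ s'.1.1 ∧
        (arr hL'0 (eR.symm f).1 (eR.symm f).2 k').isSome)
      refine le_trans (le_of_eq h8) ?_
      exact le_trans (Nat.mul_le_mul_left α (card_bound ht'0 hL'0 hs')) (le_of_eq hL2.symm)
    refine le_trans (Finset.card_le_card fun k hk => ?_) hstep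
    rw [Finset.mem_filter] at hk ⊢
    obtain ⟨-, ⟨f', hf'⟩, hsome⟩ := hk
    refine ⟨mem_univ _, ?_, ?_⟩
    · have hf'' : (arr hL'0 (eR.symm f').1 (eR.symm f').2 ((eK k).2)).map eV = some s := hf'
      rw [Option.map_eq_some_iff] at hf''
      obtain ⟨a, ha, hea⟩ := hf''
      obtain rfl : a = s' := eV.injective (hea.trans hes'.symm)
      exact arr_mem_of_some hL'0 _ _ _ _ ha
    · have h9 : ((arr hL'0 (eR.symm f).1 (eR.symm f).2 ((eK k).2)).map eV).isSome = true :=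
        hsome
      rwa [Option.isSome_map] at h9
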